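/- arXiv:1505.04093 — 2 statements merged into one kernel-verified Lean document; each statement's English description precedes it below -/
import Mathlib

section
/- If (u_1, v_1), (u_2, v_2) ∈ g↑ and (u_1, v_1) ≼ (u_2, v_2), then r↑(u_1, v_1) ≤ r↑(u_2, v_2). -/
open Set

noncomputable section

/-- The piecewise linear closed curve through the vertices `x 0, x 1, …`:
`f(i+α) = (1-α) • x i + α • x (i+1)`. -/
def fCurve {k : ℕ} (x : ℕ → EuclideanSpace ℝ (Fin k)) (t : ℝ) :
    EuclideanSpace ℝ (Fin k) :=
  (1 - Int.fract t) • x (⌊t⌋.toNat) + Int.fract t • x (⌊t⌋.toNat + 1)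

/-- The extension of the curve from `[0,m]` to `[0,2m]` by `f(u) = f(u-m)` for `u > m`. -/
def fCurveExt {k : ℕ} (m : ℕ) (x : ℕ → EuclideanSpace ℝ (Fin k)) (u : ℝ) :
    EuclideanSpace ℝ (Fin k) :=
  if u ≤ m then fCurve x u else fCurve x (u - m)

/-- The rectangle `D = [0,2m] × [0,n]`. -/
def Dfull (m n : ℕ) : Set (ℝ × ℝ) :=
  Icc (0:ℝ) (2*(m:ℝ)) ×ˢ Icc (0:ℝ) (n:ℝ)

/-- The free space `D_ε = {(u,v) ∈ D : dist (f_X u) (f_Y v) ≤ ε}`. -/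
def Dfree {k : ℕ} (m n : ℕ) (x y : ℕ → EuclideanSpace ℝ (Fin k)) (ε : ℝ) :
    Set (ℝ × ℝ) :=
  {p ∈ Dfull m n | dist (fCurveExt m x p.1) (fCurve y p.2) ≤ ε}

/-- The top side `T = [0,2m] × {n}` of `D`. -/
def Tside (m n : ℕ) : Set (ℝ × ℝ) := Icc (0:ℝ) (2*(m:ℝ)) ×ˢ {(n:ℝ)}

/-- The bottom side `B = [0,2m] × {0}` of `D`. -/
def Bside (m : ℕ) : Set (ℝ × ℝ) := Icc (0:ℝ) (2*(m:ℝ)) ×ˢ {(0:ℝ)}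

/-- A monotone (non-decreasing) path: a connected subset `γ ⊆ Dε` with
`(u-u')·(v-v') ≥ 0` for all `(u,v), (u',v') ∈ γ`. -/
def IsMonPath (Dε γ : Set (ℝ × ℝ)) : Prop :=
  γ ⊆ Dε ∧ IsConnected γ ∧
    ∀ p ∈ γ, ∀ q ∈ γ, (p.1 - q.1) * (p.2 - q.2) ≥ 0

/-- Two points are mutually reachable if some monotone path contains both. -/
def Reach (Dε : Set (ℝ × ℝ)) (p q : ℝ × ℝ) : Prop :=
  ∃ γ : Set (ℝ × ℝ), IsMonPath Dε γ ∧ p ∈ γ ∧ q ∈ γ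

/-- `g↓`: the points of `Dε` mutually reachable with at least one point of `B`. -/
def gDown (m : ℕ) (Dε : Set (ℝ × ℝ)) : Set (ℝ × ℝ) :=
  {p ∈ Dε | ∃ q ∈ Bside m, Reach Dε p q}

/-- `g↑`: the points of `Dε` mutually reachable with at least one point of `T`. -/
def gUp (m n : ℕ) (Dε : Set (ℝ × ℝ)) : Set (ℝ × ℝ) :=
  {p ∈ Dε | ∃ q ∈ Tside m n, Reach Dε p q}

/-- The pointer `r↑(p)`: the maximum `u* ∈ [0,2m]` such that `p` and `(u*, n)`
are mutually reachable. -/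
def rUp (m n : ℕ) (Dε : Set (ℝ × ℝ)) (p : ℝ × ℝ) : ℝ :=
  sSup {u : ℝ | u ∈ Icc (0:ℝ) (2*(m:ℝ)) ∧ Reach Dε p (u, (n:ℝ))}

/-- The pointer `r↓(p)`: for `p` with `p.2 > 0`, the maximum `u* ∈ [0,2m]` such
that `p` and `(u*, 0)` are mutually reachable; on the bottom side `r↓(u,0) = u`. -/
def rDown (m : ℕ) (Dε : Set (ℝ × ℝ)) (p : ℝ × ℝ) : ℝ :=
  if p.2 = 0 then p.1
  else sSup {u : ℝ | u ∈ Icc (0:ℝ) (2*(m:ℝ)) ∧ Reach Dε p (u, (0:ℝ))}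

/-- The cell `D_ij = [i-1,i] × [j-1,j]`. -/
def cellD (i j : ℕ) : Set (ℝ × ℝ) :=
  Icc ((i:ℝ)-1) (i:ℝ) ×ˢ Icc ((j:ℝ)-1) (j:ℝ)

/-- The top side `T_ij` of the cell `D_ij`. -/
def cellT (i j : ℕ) : Set (ℝ × ℝ) := Icc ((i:ℝ)-1) (i:ℝ) ×ˢ {(j:ℝ)}

/-- The bottom side `B_ij` of the cell `D_ij`. -/
def cellB (i j : ℕ) : Set (ℝ × ℝ) := Icc ((i:ℝ)-1) (i:ℝ) ×ˢ {((j:ℝ)-1)}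

/-- The right side `R_ij` of the cell `D_ij`. -/
def cellR (i j : ℕ) : Set (ℝ × ℝ) := {(i:ℝ)} ×ˢ Icc ((j:ℝ)-1) (j:ℝ)

/-- The left side `L_ij` of the cell `D_ij`. -/
def cellL (i j : ℕ) : Set (ℝ × ℝ) := {((i:ℝ)-1)} ×ˢ Icc ((j:ℝ)-1) (j:ℝ)

/-- The partial order `≼` on `D`: `(u1,v1) ≼ (u2,v2)` iff `u1 ≤ u2` and `v1 ≥ v2`. -/
def prec (p q : ℝ × ℝ) : Prop := p.1 ≤ q.1 ∧ q.2 ≤ p.2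


namespace Stmt7Aux

/-- componentwise order on the plane -/
def PL (z w : ℝ × ℝ) : Prop := z.1 ≤ w.1 ∧ z.2 ≤ w.2

lemma isClosed_below (c : ℝ × ℝ) : IsClosed {z : ℝ × ℝ | PL z c} := by
  have : {z : ℝ × ℝ | PL z c} = {z : ℝ × ℝ | z.1 ≤ c.1} ∩ {z : ℝ × ℝ | z.2 ≤ c.2} := rfl
  rw [this]
  exact (isClosed_le continuous_fst continuous_const).inter
    (isClosed_le continuous_snd continuous_const)

lemma isClosed_above (c : ℝ × ℝ) : IsClosed {z : ℝ × ℝ | PL c z} := by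
  have : {z : ℝ × ℝ | PL c z} = {z : ℝ × ℝ | c.1 ≤ z.1} ∩ {z : ℝ × ℝ | c.2 ≤ z.2} := rfl
  rw [this]
  exact (isClosed_le continuous_const continuous_fst).inter
    (isClosed_le continuous_const continuous_snd)

lemma chain_comp {Dε γ : Set (ℝ × ℝ)} (hγ : IsMonPath Dε γ) {z w : ℝ × ℝ}
    (hz : z ∈ γ) (hw : w ∈ γ) : PL z w ∨ PL w z := by
  have h := hγ.2.2 z hz w hw
  rcases le_total z.1 w.1 with h1 | h1 <;> rcases le_total z.2 w.2 with h2 | h2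
  · exact Or.inl ⟨h1, h2⟩
  · have h0 : (z.1 - w.1) * (z.2 - w.2) ≤ 0 :=
      mul_nonpos_iff.2 (Or.inr ⟨by linarith, by linarith⟩)
    rcases mul_eq_zero.1 (le_antisymm h0 h) with h3 | h3
    · exact Or.inr ⟨by linarith, h2⟩
    · exact Or.inl ⟨h1, by linarith⟩
  · have h0 : (z.1 - w.1) * (z.2 - w.2) ≤ 0 :=
      mul_nonpos_iff.2 (Or.inl ⟨by linarith, by linarith⟩)
    rcases mul_eq_zero.1 (le_antisymm h0 h) with h3 | h3
    · exact Or.inl ⟨by linarith, h2⟩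
    · exact Or.inr ⟨h1, by linarith⟩
  · exact Or.inr ⟨h1, h2⟩

lemma pl_of_phi_le {Dε γ : Set (ℝ × ℝ)} (hγ : IsMonPath Dε γ) {z w : ℝ × ℝ}
    (hz : z ∈ γ) (hw : w ∈ γ) (h : z.1 + z.2 ≤ w.1 + w.2) : PL z w := by
  rcases chain_comp hγ hz hw with h' | h'
  · exact h'
  · exact ⟨by linarith [h'.1, h'.2], by linarith [h'.1, h'.2]⟩

lemma preconn_restrict {γ K K' : Set (ℝ × ℝ)} {c : ℝ × ℝ}
    (hγ : IsPreconnected γ)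
    (hK : IsClosed K) (hK' : IsClosed K') (hcov : γ ⊆ K ∪ K')
    (huniq : ∀ z ∈ γ, z ∈ K → z ∈ K' → z = c)
    (hcγ : c ∈ γ) (hcK : c ∈ K) (hcK' : c ∈ K') :
    IsPreconnected (γ ∩ K) := by
  have H : ∀ t t' : Set (ℝ × ℝ), IsClosed t → IsClosed t' →
      γ ∩ K ⊆ t ∪ t' → ((γ ∩ K) ∩ t').Nonempty → c ∈ t →
      ((γ ∩ K) ∩ (t ∩ t')).Nonempty := by
    intro t t' ht ht' hcovA hne2 hct
    by_contra hemp
    rw [isPreconnected_closed_iff] at hγ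
    obtain ⟨z, hzγ, hz1, hz2⟩ := hγ ((t ∩ K) ∪ K') (t' ∩ K)
      ((ht.inter hK).union hK') (ht'.inter hK)
      (fun z hz => by
        rcases hcov hz with hzK | hzK'
        · rcases hcovA ⟨hz, hzK⟩ with h | h
          · exact Or.inl (Or.inl ⟨h, hzK⟩)
          · exact Or.inr ⟨h, hzK⟩
        · exact Or.inl (Or.inr hzK'))
      ⟨c, hcγ, Or.inr hcK'⟩
      (by obtain ⟨z2, ⟨h1, h2⟩, h3⟩ := hne2; exact ⟨z2, h1, h3, h2⟩)
    rcases hz1 with ⟨hzt, hzK⟩ | hzK'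
    · exact hemp ⟨z, ⟨hzγ, hzK⟩, hzt, hz2.1⟩
    · have hzc := huniq z hzγ hz2.2 hzK'
      subst hzc
      exact hemp ⟨z, ⟨hzγ, hcK⟩, hct, hz2.1⟩
  rw [isPreconnected_closed_iff]
  intro t t' ht ht' hcovA hne1 hne2
  rcases hcovA ⟨hcγ, hcK⟩ with hct | hct'
  · exact H t t' ht ht' hcovA hne2 hct
  · obtain ⟨z, hz1, hz2, hz3⟩ := H t' t ht' ht
      (fun z hz => (hcovA hz).elim Or.inr Or.inl) hne1 hct'
    exact ⟨z, hz1, hz3, hz2⟩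

lemma monpath_inter_below {Dε γ : Set (ℝ × ℝ)} {c : ℝ × ℝ}
    (hγ : IsMonPath Dε γ) (hc : c ∈ γ) :
    IsMonPath Dε (γ ∩ {z | PL z c}) := by
  refine ⟨Set.inter_subset_left.trans hγ.1,
    ⟨⟨c, hc, le_refl _, le_refl _⟩, ?_⟩, ?_⟩
  · exact preconn_restrict hγ.2.1.isPreconnected (isClosed_below c) (isClosed_above c)
      (fun z hz => chain_comp hγ hz hc)
      (fun z _ h1 h2 => Prod.ext (le_antisymm h1.1 h2.1) (le_antisymm h1.2 h2.2))
      hc ⟨le_refl _, le_refl _⟩ ⟨le_refl _, le_refl _⟩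
  · intro z hz w hw
    exact hγ.2.2 z hz.1 w hw.1

lemma monpath_inter_above {Dε γ : Set (ℝ × ℝ)} {c : ℝ × ℝ}
    (hγ : IsMonPath Dε γ) (hc : c ∈ γ) :
    IsMonPath Dε (γ ∩ {z | PL c z}) := by
  refine ⟨Set.inter_subset_left.trans hγ.1,
    ⟨⟨c, hc, le_refl _, le_refl _⟩, ?_⟩, ?_⟩
  · exact preconn_restrict hγ.2.1.isPreconnected (isClosed_above c) (isClosed_below c)
      (fun z hz => (chain_comp hγ hz hc).symm)
      (fun z _ h1 h2 => Prod.ext (le_antisymm h2.1 h1.1) (le_antisymm h2.2 h1.2))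
      hc ⟨le_refl _, le_refl _⟩ ⟨le_refl _, le_refl _⟩
  · intro z hz w hw
    exact hγ.2.2 z hz.1 w hw.1

lemma monpath_singleton {Dε : Set (ℝ × ℝ)} {z : ℝ × ℝ} (hz : z ∈ Dε) :
    IsMonPath Dε {z} := by
  refine ⟨Set.singleton_subset_iff.2 hz, isConnected_singleton, ?_⟩
  intro p hp q hq
  rw [Set.mem_singleton_iff] at hp hq
  subst hp; subst hq
  simp

/-- The crossing lemma: given monotone paths from `p` up to `a` on the top line
and from `q` up to `b` on the top line, with `p` to the upper-left of `q`
and `b` left of `a`, `q` can reach `a`. -/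
lemma cross {Dε : Set (ℝ × ℝ)} {n : ℕ} {p q a b : ℝ × ℝ} {γ₁ γ₂ : Set (ℝ × ℝ)}
    (ha2 : a.2 = n) (hb2 : b.2 = n)
    (h₁ : IsMonPath Dε γ₁) (hpγ : p ∈ γ₁) (haγ : a ∈ γ₁)
    (h₂ : IsMonPath Dε γ₂) (hqγ : q ∈ γ₂) (hbγ : b ∈ γ₂)
    (hpa : PL p a) (hqb : PL q b) (hba : b.1 ≤ a.1)
    (hp1 : p.1 ≤ q.1) (hq2 : q.2 ≤ p.2) :
    Reach Dε q a := by
  classical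
  set φ : ℝ × ℝ → ℝ := fun z => z.1 + z.2 with hφ
  -- restricted paths
  have hA₁ : IsMonPath Dε (γ₁ ∩ {z | PL p z}) := monpath_inter_above h₁ hpγ
  have haA₁ : a ∈ γ₁ ∩ {z | PL p z} := ⟨haγ, hpa⟩
  have hpA₁ : p ∈ γ₁ ∩ {z | PL p z} := ⟨hpγ, le_refl _, le_refl _⟩
  set Γ₁ : Set (ℝ × ℝ) := (γ₁ ∩ {z | PL p z}) ∩ {z | PL z a} with hΓ₁
  have hG₁ : IsMonPath Dε Γ₁ := monpath_inter_below hA₁ haA₁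
  have hpΓ₁ : p ∈ Γ₁ := ⟨hpA₁, hpa⟩
  have haΓ₁ : a ∈ Γ₁ := ⟨haA₁, le_refl _, le_refl _⟩
  have hA₂ : IsMonPath Dε (γ₂ ∩ {z | PL q z}) := monpath_inter_above h₂ hqγ
  have hbA₂ : b ∈ γ₂ ∩ {z | PL q z} := ⟨hbγ, hqb⟩
  have hqA₂ : q ∈ γ₂ ∩ {z | PL q z} := ⟨hqγ, le_refl _, le_refl _⟩
  set Γ₂ : Set (ℝ × ℝ) := (γ₂ ∩ {z | PL q z}) ∩ {z | PL z b} with hΓ₂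
  have hG₂ : IsMonPath Dε Γ₂ := monpath_inter_below hA₂ hbA₂
  have hqΓ₂ : q ∈ Γ₂ := ⟨hqA₂, hqb⟩
  have hbΓ₂ : b ∈ Γ₂ := ⟨hbA₂, le_refl _, le_refl _⟩
  have hφcont : ∀ s : Set (ℝ × ℝ), ContinuousOn φ s :=
    fun s => (continuous_fst.add continuous_snd).continuousOn
  -- surjectivity of φ on the restricted paths
  have hsur₁ : Icc (φ p) (φ a) ⊆ φ '' Γ₁ :=
    hG₁.2.1.isPreconnected.intermediate_value hpΓ₁ haΓ₁ (hφcont Γ₁)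
  have hsur₂ : Icc (φ q) (φ b) ⊆ φ '' Γ₂ :=
    hG₂.2.1.isPreconnected.intermediate_value hqΓ₂ hbΓ₂ (hφcont Γ₂)
  set Z₁ : ℝ → ℝ × ℝ := fun s => if h : s ∈ φ '' Γ₁ then h.choose else p with hZ₁def
  set Z₂ : ℝ → ℝ × ℝ := fun s => if h : s ∈ φ '' Γ₂ then h.choose else q with hZ₂def
  have hZ₁ : ∀ s ∈ Icc (φ p) (φ a), Z₁ s ∈ Γ₁ ∧ φ (Z₁ s) = s := by
    intro s hs
    have h := hsur₁ hs
    simp only [hZ₁def, dif_pos h]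
    exact ⟨h.choose_spec.1, h.choose_spec.2⟩
  have hZ₂ : ∀ s ∈ Icc (φ q) (φ b), Z₂ s ∈ Γ₂ ∧ φ (Z₂ s) = s := by
    intro s hs
    have h := hsur₂ hs
    simp only [hZ₂def, dif_pos h]
    exact ⟨h.choose_spec.1, h.choose_spec.2⟩
  set W₁ : ℝ → ℝ := fun s => (Z₁ s).1 - (Z₁ s).2 with hW₁def
  set W₂ : ℝ → ℝ := fun s => (Z₂ s).1 - (Z₂ s).2 with hW₂def
  -- lipschitz bound for the w-coordinate along a chain
  have hkey : ∀ (Dε' γ' : Set (ℝ × ℝ)), IsMonPath Dε' γ' → ∀ z ∈ γ', ∀ w ∈ γ',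
      |(z.1 - z.2) - (w.1 - w.2)| ≤ |(z.1 + z.2) - (w.1 + w.2)| := by
    intro Dε' γ' hγ' z hz w hw
    rcases chain_comp hγ' hz hw with h | h
    · rw [abs_of_nonpos (by linarith [h.1, h.2] : (z.1 + z.2) - (w.1 + w.2) ≤ 0)]
      exact abs_le.2 ⟨by linarith [h.1, h.2], by linarith [h.1, h.2]⟩
    · rw [abs_of_nonneg (by linarith [h.1, h.2] : (0:ℝ) ≤ (z.1 + z.2) - (w.1 + w.2))]
      exact abs_le.2 ⟨by linarith [h.1, h.2], by linarith [h.1, h.2]⟩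
  have hlip₁ : ∀ s ∈ Icc (φ p) (φ a), ∀ s' ∈ Icc (φ p) (φ a),
      dist (W₁ s) (W₁ s') ≤ dist s s' := by
    intro s hs s' hs'
    obtain ⟨hm, he⟩ := hZ₁ s hs
    obtain ⟨hm', he'⟩ := hZ₁ s' hs'
    have := hkey Dε Γ₁ hG₁ _ hm _ hm'
    rw [Real.dist_eq, Real.dist_eq]
    calc |W₁ s - W₁ s'| ≤ |φ (Z₁ s) - φ (Z₁ s')| := this
    _ = |s - s'| := by rw [he, he']
  have hlip₂ : ∀ s ∈ Icc (φ q) (φ b), ∀ s' ∈ Icc (φ q) (φ b),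
      dist (W₂ s) (W₂ s') ≤ dist s s' := by
    intro s hs s' hs'
    obtain ⟨hm, he⟩ := hZ₂ s hs
    obtain ⟨hm', he'⟩ := hZ₂ s' hs'
    have := hkey Dε Γ₂ hG₂ _ hm _ hm'
    rw [Real.dist_eq, Real.dist_eq]
    calc |W₂ s - W₂ s'| ≤ |φ (Z₂ s) - φ (Z₂ s')| := this
    _ = |s - s'| := by rw [he, he']
  have hcont₁ : ContinuousOn W₁ (Icc (φ p) (φ a)) := by
    refine LipschitzOnWith.continuousOn (K := 1) (lipschitzOnWith_iff_dist_le_mul.2 ?_)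
    intro s hs s' hs'
    simpa using hlip₁ s hs s' hs'
  have hcont₂ : ContinuousOn W₂ (Icc (φ q) (φ b)) := by
    refine LipschitzOnWith.continuousOn (K := 1) (lipschitzOnWith_iff_dist_le_mul.2 ?_)
    intro s hs s' hs'
    simpa using hlip₂ s hs s' hs'
  -- endpoints of the common interval
  set s₀ : ℝ := max (φ p) (φ q) with hs₀def
  have hqn : q.2 ≤ (n:ℝ) := le_trans hqb.2 (le_of_eq hb2)
  have hpn : p.2 ≤ (n:ℝ) := le_trans hpa.2 (le_of_eq ha2)
  have hpb : φ p ≤ φ b := by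
    have : q.1 ≤ b.1 := hqb.1
    simp only [hφ]
    rw [hb2]
    linarith
  have hqb' : φ q ≤ φ b := by simp only [hφ]; linarith [hqb.1, hqb.2]
  have hba' : φ b ≤ φ a := by simp only [hφ]; rw [hb2, ha2]; linarith
  have hs₀b : s₀ ≤ φ b := max_le hpb hqb'
  have hsub₁ : Icc s₀ (φ b) ⊆ Icc (φ p) (φ a) :=
    Icc_subset_Icc (le_max_left _ _) hba'
  have hsub₂ : Icc s₀ (φ b) ⊆ Icc (φ q) (φ b) :=
    Icc_subset_Icc (le_max_right _ _) (le_refl _)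
  -- sign at the right endpoint
  have hgb : W₂ (φ b) ≤ W₁ (φ b) := by
    obtain ⟨hm₁, he₁⟩ := hZ₁ (φ b) ⟨hpb, hba'⟩
    obtain ⟨hm₂, he₂⟩ := hZ₂ (φ b) ⟨hqb', le_refl _⟩
    have h₁a : PL (Z₁ (φ b)) a := hm₁.2
    have h₂b : PL (Z₂ (φ b)) b := hm₂.2
    simp only [hW₁def, hW₂def]
    have e₁ : (Z₁ (φ b)).1 + (Z₁ (φ b)).2 = b.1 + b.2 := he₁
    have e₂ : (Z₂ (φ b)).1 + (Z₂ (φ b)).2 = b.1 + b.2 := he₂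
    have hz2 : (Z₁ (φ b)).2 ≤ (n:ℝ) := le_trans h₁a.2 (le_of_eq ha2)
    have hb2' : b.2 = (n:ℝ) := hb2
    linarith [h₂b.1, h₂b.2]
  -- sign at the left endpoint
  have hg0 : W₁ s₀ ≤ W₂ s₀ := by
    have hs₀mem₁ : s₀ ∈ Icc (φ p) (φ a) := hsub₁ ⟨le_refl _, hs₀b⟩
    have hs₀mem₂ : s₀ ∈ Icc (φ q) (φ b) := hsub₂ ⟨le_refl _, hs₀b⟩
    obtain ⟨hm₁, he₁⟩ := hZ₁ s₀ hs₀mem₁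
    obtain ⟨hm₂, he₂⟩ := hZ₂ s₀ hs₀mem₂
    have hp₁ : PL p (Z₁ s₀) := hm₁.1.2
    have hq₂ : PL q (Z₂ s₀) := hm₂.1.2
    have e₁ : (Z₁ s₀).1 + (Z₁ s₀).2 = s₀ := he₁
    have e₂ : (Z₂ s₀).1 + (Z₂ s₀).2 = s₀ := he₂
    simp only [hW₁def, hW₂def]
    have hφp : φ p = p.1 + p.2 := rfl
    have hφq : φ q = q.1 + q.2 := rfl
    have hs₀e : (Z₁ s₀).1 + (Z₁ s₀).2 = (Z₂ s₀).1 + (Z₂ s₀).2 := by rw [e₁, e₂]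
    rcases le_total (φ q) (φ p) with hc | hc
    · -- s₀ = φ p, so Z₁ s₀ = p
      have hs₀p : s₀ = φ p := max_eq_left hc
      have e₁' : (Z₁ s₀).1 + (Z₁ s₀).2 = p.1 + p.2 := e₁.trans (hs₀p.trans hφp)
      have h1 : (Z₁ s₀).1 = p.1 := by linarith [hp₁.1, hp₁.2]
      linarith [hq₂.1, hq₂.2, hp1]
    · -- s₀ = φ q, so Z₂ s₀ = q
      have hs₀q : s₀ = φ q := max_eq_right hc
      have e₂' : (Z₂ s₀).1 + (Z₂ s₀).2 = q.1 + q.2 := e₂.trans (hs₀q.trans hφq)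
      have h1 : (Z₂ s₀).1 = q.1 := by linarith [hq₂.1, hq₂.2]
      linarith [hp₁.1, hp₁.2, hq2]
  -- IVT for W₁ - W₂
  have hgcont : ContinuousOn (fun s => W₁ s - W₂ s) (Icc s₀ (φ b)) :=
    (hcont₁.mono hsub₁).sub (hcont₂.mono hsub₂)
  have h0mem : (0:ℝ) ∈ Icc (W₁ s₀ - W₂ s₀) (W₁ (φ b) - W₂ (φ b)) :=
    ⟨by linarith, by linarith⟩
  obtain ⟨s, hsmem, hgs⟩ := intermediate_value_Icc hs₀b hgcont h0mem
  have hs₁ : s ∈ Icc (φ p) (φ a) := hsub₁ hsmem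
  have hs₂ : s ∈ Icc (φ q) (φ b) := hsub₂ hsmem
  obtain ⟨hm₁, he₁⟩ := hZ₁ s hs₁
  obtain ⟨hm₂, he₂⟩ := hZ₂ s hs₂
  -- the crossing point
  have hceq : Z₁ s = Z₂ s := by
    have e₁ : (Z₁ s).1 + (Z₁ s).2 = s := he₁
    have e₂ : (Z₂ s).1 + (Z₂ s).2 = s := he₂
    have e₃ : (Z₁ s).1 - (Z₁ s).2 - ((Z₂ s).1 - (Z₂ s).2) = 0 := hgs
    exact Prod.ext (by linarith) (by linarith)
  have hcγ₁ : Z₁ s ∈ γ₁ := hm₁.1.1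
  have hcγ₂ : Z₁ s ∈ γ₂ := by rw [hceq]; exact hm₂.1.1
  have hca : PL (Z₁ s) a := hm₁.2
  have hqc : PL q (Z₁ s) := by rw [hceq]; exact hm₂.1.2
  set c : ℝ × ℝ := Z₁ s with hcdef
  -- the combined path
  refine ⟨(γ₂ ∩ {z | PL z c}) ∪ (γ₁ ∩ {z | PL c z}), ⟨?_, ?_, ?_⟩, ?_, ?_⟩
  · exact Set.union_subset (Set.inter_subset_left.trans h₂.1)
      (Set.inter_subset_left.trans h₁.1)
  · refine IsConnected.union ⟨c, ⟨hcγ₂, le_refl _, le_refl _⟩, ⟨hcγ₁, le_refl _, le_refl _⟩⟩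
      (monpath_inter_below h₂ hcγ₂).2.1 (monpath_inter_above h₁ hcγ₁).2.1
  · rintro z (hz | hz) w (hw | hw)
    · exact h₂.2.2 z hz.1 w hw.1
    · have h1 : z.1 ≤ w.1 := le_trans hz.2.1 hw.2.1
      have h2 : z.2 ≤ w.2 := le_trans hz.2.2 hw.2.2
      nlinarith
    · have h1 : w.1 ≤ z.1 := le_trans hw.2.1 hz.2.1
      have h2 : w.2 ≤ z.2 := le_trans hw.2.2 hz.2.2
      nlinarith
    · exact h₁.2.2 z hz.1 w hw.1
  · exact Or.inl ⟨hqγ, hqc⟩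
  · exact Or.inr ⟨haγ, hca⟩

lemma mem_Dfull_of_mem {k m n : ℕ} {x y : ℕ → EuclideanSpace ℝ (Fin k)} {ε : ℝ}
    {z : ℝ × ℝ} (hz : z ∈ Dfree m n x y ε) :
    z.1 ∈ Icc (0:ℝ) (2*(m:ℝ)) ∧ z.2 ∈ Icc (0:ℝ) (n:ℝ) := by
  have h := hz.1
  exact ⟨h.1, h.2⟩

/-- Main step: if `p` can reach `a = (a.1, n)` monotonically with `p ≼ a`,
and `q` is in `g↑` with `p ≼' q`, then `q` reaches a top point at least as
far right as `a.1`. -/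
lemma main {k m n : ℕ} {x y : ℕ → EuclideanSpace ℝ (Fin k)} {ε : ℝ}
    {Dε : Set (ℝ × ℝ)} (hDε : Dε = Dfree m n x y ε)
    {p q a : ℝ × ℝ} (ha2 : a.2 = n)
    {γ₁ : Set (ℝ × ℝ)} (h₁ : IsMonPath Dε γ₁) (hpγ : p ∈ γ₁) (haγ : a ∈ γ₁)
    (hpa : PL p a)
    (hq : q ∈ gUp m n Dε)
    (hp1 : p.1 ≤ q.1) (hq2 : q.2 ≤ p.2) :
    ∃ w ∈ {u : ℝ | u ∈ Icc (0:ℝ) (2*(m:ℝ)) ∧ Reach Dε q (u, (n:ℝ))}, a.1 ≤ w := by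
  obtain ⟨hqDε, b₀, hb₀T, γ₂, h₂, hqγ₂, hb₀γ₂⟩ := hq
  have hb₀1 : b₀.1 ∈ Icc (0:ℝ) (2*(m:ℝ)) := hb₀T.1
  have hb₀2 : b₀.2 = (n:ℝ) := hb₀T.2
  have hqD : q.1 ∈ Icc (0:ℝ) (2*(m:ℝ)) ∧ q.2 ∈ Icc (0:ℝ) (n:ℝ) :=
    mem_Dfull_of_mem (hDε ▸ hqDε)
  -- reduce to the case q ≼ b
  obtain ⟨b, γ₂', hb2, hbIcc, h₂', hqγ₂', hbγ₂', hqb⟩ :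
      ∃ (b : ℝ × ℝ) (γ₂' : Set (ℝ × ℝ)), b.2 = (n:ℝ) ∧ b.1 ∈ Icc (0:ℝ) (2*(m:ℝ)) ∧
        IsMonPath Dε γ₂' ∧ q ∈ γ₂' ∧ b ∈ γ₂' ∧ PL q b := by
    rcases chain_comp h₂ hqγ₂ hb₀γ₂ with h | h
    · exact ⟨b₀, γ₂, hb₀2, hb₀1, h₂, hqγ₂, hb₀γ₂, h⟩
    · have hq2n : q.2 = (n:ℝ) := le_antisymm hqD.2.2 (hb₀2 ▸ h.2)
      exact ⟨q, {q}, hq2n, hqD.1, monpath_singleton hqDε,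
        rfl, rfl, le_refl _, le_refl _⟩
  have haDε : a ∈ Dε := h₁.1 haγ
  have haD : a.1 ∈ Icc (0:ℝ) (2*(m:ℝ)) ∧ a.2 ∈ Icc (0:ℝ) (n:ℝ) :=
    mem_Dfull_of_mem (hDε ▸ haDε)
  rcases le_total a.1 b.1 with hab | hba
  · -- then b itself works
    refine ⟨b.1, ⟨hbIcc, ?_⟩, hab⟩
    have : ((b.1 : ℝ), (n:ℝ)) = b := Prod.ext rfl hb2.symm
    rw [this]
    exact ⟨γ₂', h₂', hqγ₂', hbγ₂'⟩
  · -- crossing argument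
    have hreach : Reach Dε q a :=
      cross ha2 hb2 h₁ hpγ haγ h₂' hqγ₂' hbγ₂' hpa hqb hba hp1 hq2
    refine ⟨a.1, ⟨haD.1, ?_⟩, le_refl _⟩
    have : ((a.1 : ℝ), (n:ℝ)) = a := Prod.ext rfl ha2.symm
    rw [this]
    exact hreach

end Stmt7Aux

theorem stmt7
    (k m n : ℕ) (hk : 1 ≤ k) (hm : 1 ≤ m) (hn : 1 ≤ n)
    (x y : ℕ → EuclideanSpace ℝ (Fin k)) (hx : x m = x 0) (hy : y n = y 0)
    (ε : ℝ) (hε : 0 ≤ ε)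
    (Dε : Set (ℝ × ℝ)) (hDε : Dε = Dfree m n x y ε)
    (p q : ℝ × ℝ) (hp : p ∈ gUp m n Dε) (hq : q ∈ gUp m n Dε)
    (hpq : prec p q) :
    rUp m n Dε p ≤ rUp m n Dε q := by
  classical
  open Stmt7Aux in
  have hpDε : p ∈ Dε := hp.1
  have hqDε : q ∈ Dε := hq.1
  have hpD := Stmt7Aux.mem_Dfull_of_mem (hDε ▸ hpDε)
  have hbdd : BddAbove {u : ℝ | u ∈ Icc (0:ℝ) (2*(m:ℝ)) ∧ Reach Dε q (u, (n:ℝ))} :=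
    ⟨2*(m:ℝ), fun z hz => hz.1.2⟩
  -- the set for p is nonempty
  obtain ⟨_, b₀, hb₀T, hreach₀⟩ := hp
  have hSpne : {u : ℝ | u ∈ Icc (0:ℝ) (2*(m:ℝ)) ∧ Reach Dε p (u, (n:ℝ))}.Nonempty := by
    refine ⟨b₀.1, hb₀T.1, ?_⟩
    have : ((b₀.1 : ℝ), (n:ℝ)) = b₀ := Prod.ext rfl hb₀T.2.symm
    rw [this]
    exact hreach₀
  unfold rUp
  apply csSup_le hSpne
  intro u hu
  obtain ⟨huIcc, γ₁, h₁, hpγ, haγ⟩ := hu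
  have hkey : ∃ w ∈ {u : ℝ | u ∈ Icc (0:ℝ) (2*(m:ℝ)) ∧ Reach Dε q (u, (n:ℝ))}, u ≤ w := by
    rcases Stmt7Aux.chain_comp h₁ hpγ haγ with hpa | hap
    · obtain ⟨w, hw, haw⟩ := Stmt7Aux.main hDε (rfl : ((u, (n:ℝ))).2 = (n:ℝ)) h₁ hpγ haγ
        hpa hq hpq.1 hpq.2
      exact ⟨w, hw, haw⟩
    · -- a ≼ p : then p is on the top side
      have hp2n : p.2 = (n:ℝ) := le_antisymm hpD.2.2 hap.2
      have hup1 : u ≤ p.1 := hap.1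
      obtain ⟨w, hw, haw⟩ := Stmt7Aux.main hDε hp2n h₁ hpγ hpγ
        (⟨le_refl _, le_refl _⟩ : Stmt7Aux.PL p p) hq hpq.1 hpq.2
      exact ⟨w, hw, le_trans hup1 haw⟩
  obtain ⟨w, hw, huw⟩ := hkey
  exact le_trans huw (le_csSup hbdd hw)
end
end

section
/- For each i ∈ {1,…,2m} and j ∈ {1,…,n}, the set D_ε ∩ D_ij is convex. -/
open Set

noncomputable section

lemma fCurve_affine {k : ℕ} (x : ℕ → EuclideanSpace ℝ (Fin k)) (a : ℕ) (ha : 1 ≤ a)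
    (u : ℝ) (h1 : (a:ℝ) - 1 ≤ u) (h2 : u ≤ a) :
    fCurve x u = ((a:ℝ) - u) • x (a-1) + (u - ((a:ℝ)-1)) • x a := by
  rcases eq_or_lt_of_le h2 with he | hlt
  · rw [he]
    simp [fCurve, Int.fract_natCast, Int.floor_natCast]
  · have hf : ⌊u⌋ = (a:ℤ) - 1 := by
      rw [Int.floor_eq_iff]
      constructor
      · push_cast; linarith
      · push_cast; linarith
    have htn : ((a:ℤ) - 1).toNat = a - 1 := by omega
    have htn2 : (a - 1) + 1 = a := by omega
    unfold fCurve
    rw [Int.fract, hf, htn, htn2]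
    have hc1 : (1 : ℝ) - (u - (((a:ℤ) - 1 : ℤ) : ℝ)) = (a:ℝ) - u := by push_cast; ring
    have hc2 : (u - (((a:ℤ) - 1 : ℤ) : ℝ)) = u - ((a:ℝ) - 1) := by push_cast; ring
    rw [hc1, hc2]

lemma fCurveExt_affine {k : ℕ} (m : ℕ) (hm : 1 ≤ m) (x : ℕ → EuclideanSpace ℝ (Fin k))
    (hx : x m = x 0) (i : ℕ) (hi1 : 1 ≤ i) (hi2 : i ≤ 2*m)
    (u : ℝ) (h1 : (i:ℝ) - 1 ≤ u) (h2 : u ≤ i) :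
    fCurveExt m x u = ((i:ℝ) - u) • x ((if i ≤ m then i else i - m) - 1)
      + (u - ((i:ℝ)-1)) • x (if i ≤ m then i else i - m) := by
  by_cases him : i ≤ m
  · rw [if_pos him, fCurveExt, if_pos (le_trans h2 (by exact_mod_cast him))]
    exact fCurve_affine x i hi1 u h1 h2
  · rw [if_neg him]
    push_neg at him
    by_cases hum : u ≤ m
    · have hi : i = m + 1 := by
        have h3 : (i:ℝ) ≤ (m:ℝ) + 1 := by linarith
        have h4 : i ≤ m + 1 := by exact_mod_cast h3
        omega
      have hu : u = (m:ℝ) := by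
        apply le_antisymm hum
        rw [hi] at h1; push_cast at h1; linarith
      rw [fCurveExt, if_pos hum, hu, hi]
      have ha : m + 1 - m = 1 := by omega
      rw [ha]
      have : fCurve x (m:ℝ) = x m := by
        simp [fCurve, Int.fract_natCast, Int.floor_natCast]
      rw [this, hx]
      push_cast
      have c1 : ((m:ℝ) + 1 - (m:ℝ)) = 1 := by ring
      have c2 : ((m:ℝ) - ((m:ℝ) + 1 - 1)) = 0 := by ring
      rw [c1, c2, one_smul, zero_smul, add_zero]
    · push_neg at hum
      rw [fCurveExt, if_neg (not_le.mpr hum)]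
      have ha : 1 ≤ i - m := by omega
      have hca : ((i - m : ℕ):ℝ) = (i:ℝ) - (m:ℝ) := by
        push_cast [Nat.cast_sub (le_of_lt him)]; ring
      have key := fCurve_affine x (i - m) ha (u - m)
        (by rw [hca]; linarith) (by rw [hca]; linarith)
      rw [key, hca]
      have c1 : ((i:ℝ) - (m:ℝ) - (u - (m:ℝ))) = (i:ℝ) - u := by ring
      have c2 : (u - (m:ℝ) - ((i:ℝ) - (m:ℝ) - 1)) = u - ((i:ℝ) - 1) := by ring
      rw [c1, c2]

theorem stmt8
    (k m n : ℕ) (hk : 1 ≤ k) (hm : 1 ≤ m) (hn : 1 ≤ n)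
    (x y : ℕ → EuclideanSpace ℝ (Fin k)) (hx : x m = x 0) (hy : y n = y 0)
    (ε : ℝ) (hε : 0 ≤ ε)
    (Dε : Set (ℝ × ℝ)) (hDε : Dε = Dfree m n x y ε)
    (i j : ℕ) (hi1 : 1 ≤ i) (hi2 : i ≤ 2*m) (hj1 : 1 ≤ j) (hj2 : j ≤ n) :
    Convex ℝ (Dε ∩ cellD i j) := by
  set a := if i ≤ m then i else i - m with ha
  set g : ℝ × ℝ → EuclideanSpace ℝ (Fin k) := fun w =>
    (((i:ℝ) - w.1) • x (a-1) + (w.1 - ((i:ℝ)-1)) • x a)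
      - ((((j:ℝ) - w.2) • y (j-1) + (w.2 - ((j:ℝ)-1)) • y j)) with hg
  have hcell : ∀ w : ℝ × ℝ, w ∈ cellD i j →
      fCurveExt m x w.1 - fCurve y w.2 = g w := by
    intro w hw
    rw [cellD, Set.mem_prod] at hw
    obtain ⟨⟨hw1, hw2⟩, hw3, hw4⟩ := hw
    rw [hg]
    rw [fCurveExt_affine m hm x hx i hi1 hi2 w.1 hw1 hw2,
      fCurve_affine y j hj1 w.2 hw3 hw4]
  intro p hp q hq c c' hc hc' hcc
  obtain ⟨hpD, hpC⟩ := hp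
  obtain ⟨hqD, hqC⟩ := hq
  have hcellConvex : Convex ℝ (cellD i j) :=
    (convex_Icc _ _).prod (convex_Icc _ _)
  have hrC : c • p + c' • q ∈ cellD i j := hcellConvex hpC hqC hc hc' hcc
  refine ⟨?_, hrC⟩
  rw [hDε] at hpD hqD ⊢
  obtain ⟨_, hpd⟩ := hpD
  obtain ⟨_, hqd⟩ := hqD
  constructor
  · -- membership in Dfull
    rw [cellD, Set.mem_prod] at hrC
    obtain ⟨⟨h1, h2⟩, h3, h4⟩ := hrC
    constructor
    · constructor
      · have : (1:ℝ) ≤ (i:ℝ) := by exact_mod_cast hi1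
        linarith
      · have : (i:ℝ) ≤ 2*(m:ℝ) := by exact_mod_cast hi2
        linarith
    · constructor
      · have : (1:ℝ) ≤ (j:ℝ) := by exact_mod_cast hj1
        linarith
      · have : (j:ℝ) ≤ (n:ℝ) := by exact_mod_cast hj2
        linarith
  · -- distance bound
    have hdp : dist (fCurveExt m x p.1) (fCurve y p.2) = ‖g p‖ := by
      rw [dist_eq_norm, hcell p hpC]
    have hdq : dist (fCurveExt m x q.1) (fCurve y q.2) = ‖g q‖ := by
      rw [dist_eq_norm, hcell q hqC]
    rw [dist_eq_norm, hcell _ hrC]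
    have hc' : c' = 1 - c := by linarith
    have hkey : g (c • p + c' • q) = c • g p + c' • g q := by
      rw [hg]
      simp only [Prod.fst_add, Prod.snd_add, Prod.smul_fst, Prod.smul_snd, smul_eq_mul]
      rw [hc']
      module
    rw [hkey]
    calc ‖c • g p + c' • g q‖ ≤ ‖c • g p‖ + ‖c' • g q‖ := norm_add_le _ _
      _ = c * ‖g p‖ + c' * ‖g q‖ := by
          rw [norm_smul, norm_smul, Real.norm_of_nonneg hc,
            Real.norm_of_nonneg (by linarith : (0:ℝ) ≤ c')]
      _ ≤ c * ε + c' * ε := by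
          apply add_le_add
          · exact mul_le_mul_of_nonneg_left (hdp ▸ hpd) hc
          · exact mul_le_mul_of_nonneg_left (hdq ▸ hqd) (by linarith)
      _ = ε := by rw [hc']; ring
end
end
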